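/- Let G be a connected simple graph, k an even integer ≥ 4, and x a positive vector on V(G). Define 𝐱 on V(G^{k,k/2}) by 𝐱_u = x_v^{2/k} for each u in the blown-up set 𝐯. Then x satisfies A(G)x = ρ x (the adjacency eigenvector equation with eigenvalue ρ) if and only if 𝐱 satisfies the adjacency-tensor eigenvector equation of G^{k,k/2} with eigenvalue ρ: for every vertex u ∈ 𝐮, ρ 𝐱_u^{k-1} = Σ_{𝐮𝐯 ∈ E(G^{k,k/2})} 𝐱_𝐮^{k/2 - 1} 𝐱_𝐯^{k/2}. Consequently ρ(A(G)) = ρ(𝒜(G^{k,k/2})). -/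

import Mathlib

open Matrix

noncomputable def specRad {m : Type*} [Fintype m] [DecidableEq m]
    (M : Matrix m m ℝ) : ℝ :=
  sSup {r : ℝ | ∃ μ ∈ spectrum ℂ (M.map (Complex.ofReal)), r = ‖μ‖}

/-- The blow-up of a vertex `v` into a `(k/2)`-set. -/
def blow {V : Type*} [DecidableEq V] (k : ℕ) (v : V) : Finset (V × ℕ) :=
  ({v} : Finset V) ×ˢ Finset.range (k / 2)

/-- The edge set of the hypergraph `G^{k,k/2}`. -/
def hEdges {V : Type*} [Fintype V] [DecidableEq V] (G : SimpleGraph V)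
    [DecidableRel G.Adj] (k : ℕ) : Finset (Finset (V × ℕ)) :=
  (Finset.univ.filter fun p : V × V => G.Adj p.1 p.2).image
    (fun p => blow k p.1 ∪ blow k p.2)

/-- `(𝒜 x^{k-1})_u` for the adjacency tensor of a `k`-uniform hypergraph with edge set
`E`: the sum over edges `e` containing `u` of `∏_{w ∈ e \ {u}} x_w`. -/
noncomputable def aPoly {W : Type*} [DecidableEq W] (E : Finset (Finset W)) (x : W → ℂ) (u : W) : ℂ :=
  ∑ e ∈ E.filter (fun e => u ∈ e), ∏ w ∈ e.erase u, x w

/-- The spectral radius of the adjacency tensor of a `k`-uniform hypergraph: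
the supremum of moduli of eigenvalues `λ` with `𝒜 x^{k-1} = λ x^{[k-1]}`, `x ≠ 0`. -/
noncomputable def hSpecRad {W : Type*} [DecidableEq W] (E : Finset (Finset W))
    (k : ℕ) : ℝ :=
  sSup {r : ℝ | ∃ (lam : ℂ) (x : W → ℂ), x ≠ 0 ∧
    (∀ u, aPoly E x u = lam * (x u) ^ (k - 1)) ∧ r = ‖lam‖}


section AuxSpec
open Finset
variable {V : Type*} [Fintype V] [DecidableEq V] (G : SimpleGraph V) [DecidableRel G.Adj]

lemma mem_blow {k : ℕ} {a v : V} {i : ℕ} : (a, i) ∈ blow k v ↔ a = v ∧ i < k / 2 := by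
  constructor
  · intro h
    obtain ⟨h1, h2⟩ := Finset.mem_product.1 h
    exact ⟨Finset.mem_singleton.1 h1, Finset.mem_range.1 h2⟩
  · rintro ⟨rfl, h⟩
    exact Finset.mem_product.2 ⟨Finset.mem_singleton_self _, Finset.mem_range.2 h⟩

lemma mem_hEdges {k : ℕ} {e : Finset (V × ℕ)} :
    e ∈ hEdges G k ↔ ∃ a b, G.Adj a b ∧ e = blow k a ∪ blow k b := by
  simp only [hEdges, Finset.mem_image, Finset.mem_filter, Finset.mem_univ, true_and,
    Prod.exists]
  constructor
  · rintro ⟨a, b, h, rfl⟩; exact ⟨a, b, h, rfl⟩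
  · rintro ⟨a, b, h, rfl⟩; exact ⟨a, b, h, rfl⟩

lemma filter_hEdges_isolated {k : ℕ} {v : V} {i : ℕ} (hi : ¬ i < k / 2) :
    (hEdges G k).filter (fun e => (v, i) ∈ e) = ∅ := by
  rw [Finset.filter_eq_empty_iff]
  intro e he
  rw [mem_hEdges] at he
  obtain ⟨a, b, -, rfl⟩ := he
  simp [mem_blow, hi]

lemma filter_hEdges {k : ℕ} {v : V} {i : ℕ} (hi : i < k / 2) :
    (hEdges G k).filter (fun e => (v, i) ∈ e) =
      (G.neighborFinset v).image (fun w => blow k v ∪ blow k w) := by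
  ext e
  simp only [Finset.mem_filter, Finset.mem_image, SimpleGraph.mem_neighborFinset, mem_hEdges]
  constructor
  · rintro ⟨⟨a, b, hab, rfl⟩, hm⟩
    rcases Finset.mem_union.1 hm with h | h
    · obtain ⟨rfl, -⟩ := mem_blow.1 h
      exact ⟨b, hab, rfl⟩
    · obtain ⟨rfl, -⟩ := mem_blow.1 h
      exact ⟨a, hab.symm, Finset.union_comm _ _⟩
  · rintro ⟨w, hw, rfl⟩
    exact ⟨⟨v, w, hw, rfl⟩, Finset.mem_union_left _ (mem_blow.2 ⟨rfl, hi⟩)⟩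

lemma blow_disjoint {k : ℕ} {v w : V} (h : v ≠ w) : Disjoint (blow k v) (blow k w) := by
  rw [Finset.disjoint_left]
  rintro ⟨a, i⟩ ha hb
  exact h ((mem_blow.1 ha).1 ▸ (mem_blow.1 hb).1.symm ▸ rfl)

lemma prod_blow {k : ℕ} (X : V × ℕ → ℂ) (w : V) :
    ∏ p ∈ blow k w, X p = ∏ j ∈ Finset.range (k / 2), X (w, j) := by
  rw [blow, Finset.prod_product]
  simp

lemma erase_blow {k : ℕ} (v : V) {i : ℕ} (hi : i < k / 2) :
    (blow k v).erase (v, i) = ({v} : Finset V) ×ˢ ((Finset.range (k / 2)).erase i) := by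
  ext ⟨a, j⟩
  simp only [Finset.mem_erase, mem_blow, Prod.mk.injEq, Finset.mem_product,
    Finset.mem_singleton, Finset.mem_range, ne_eq, not_and]
  tauto

lemma prod_edge_erase {k : ℕ} (X : V × ℕ → ℂ) {v w : V} (hvw : v ≠ w) {i : ℕ}
    (hi : i < k / 2) :
    ∏ p ∈ (blow k v ∪ blow k w).erase (v, i), X p =
      (∏ j ∈ (Finset.range (k / 2)).erase i, X (v, j)) *
        ∏ j ∈ Finset.range (k / 2), X (w, j) := by
  have h1 : (blow k v ∪ blow k w).erase (v, i) = (blow k v).erase (v, i) ∪ blow k w := by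
    rw [Finset.erase_union_distrib]
    congr 1
    rw [Finset.erase_eq_of_notMem]
    simp only [mem_blow, not_and]
    exact fun h => absurd h hvw
  rw [h1, Finset.prod_union, prod_blow, erase_blow _ hi, Finset.prod_product]
  · simp
  · exact Finset.disjoint_of_subset_left (Finset.erase_subset _ _) (blow_disjoint hvw)

lemma aPoly_hEdges {k : ℕ} (X : V × ℕ → ℂ) (v : V) {i : ℕ} (hi : i < k / 2)
    (hk : 1 ≤ k / 2) :
    aPoly (hEdges G k) X (v, i) =
      ∑ w ∈ G.neighborFinset v,
        (∏ j ∈ (Finset.range (k / 2)).erase i, X (v, j)) *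
          ∏ j ∈ Finset.range (k / 2), X (w, j) := by
  rw [aPoly, filter_hEdges G hi, Finset.sum_image]
  · refine Finset.sum_congr rfl fun w hw => ?_
    exact prod_edge_erase X (G.ne_of_adj ((SimpleGraph.mem_neighborFinset G v w).1 hw).symm).symm hi
  · intro a ha b hb hab
    have h0 : (a, 0) ∈ blow k v ∪ blow k a := Finset.mem_union_right _ (mem_blow.2 ⟨rfl, hk⟩)
    rw [show blow k v ∪ blow k a = blow k v ∪ blow k b from hab] at h0
    rcases Finset.mem_union.1 h0 with h | h
    · exact absurd ((mem_blow.1 h).1) (G.ne_of_adj ((SimpleGraph.mem_neighborFinset G v a).1 ha).symm)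
    · exact (mem_blow.1 h).1

lemma aPoly_hEdges_isolated {k : ℕ} (X : V × ℕ → ℂ) (v : V) {i : ℕ} (hi : ¬ i < k / 2) :
    aPoly (hEdges G k) X (v, i) = 0 := by
  rw [aPoly, filter_hEdges_isolated G hi, Finset.sum_empty]

lemma spec_iff (M : Matrix V V ℂ) (μ : ℂ) :
    μ ∈ spectrum ℂ M ↔ ∃ Y : V → ℂ, Y ≠ 0 ∧ M *ᵥ Y = μ • Y := by
  have key : ∀ Y : V → ℂ, (∑ j : V, (M *ᵥ Y) j • (Pi.basisFun ℂ V) j) = M *ᵥ Y := by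
    intro Y; funext i
    simp [Pi.basisFun_apply, Pi.single_apply, Finset.sum_ite_eq]
  rw [← AlgEquiv.spectrum_eq (Matrix.toLinAlgEquiv (Pi.basisFun ℂ V)) M,
    ← Module.End.hasEigenvalue_iff_mem_spectrum, Module.End.hasEigenvalue_iff,
    Submodule.ne_bot_iff]
  constructor
  · rintro ⟨Y, hY, hY0⟩
    rw [Module.End.mem_eigenspace_iff] at hY
    refine ⟨Y, hY0, ?_⟩
    simp only [Matrix.toLinAlgEquiv_apply, Matrix.toLin_apply, Pi.basisFun_repr, key] at hY
    exact hY
  · rintro ⟨Y, hY0, hY⟩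
    refine ⟨Y, ?_, hY0⟩
    rw [Module.End.mem_eigenspace_iff]
    simp only [Matrix.toLinAlgEquiv_apply, Matrix.toLin_apply, Pi.basisFun_repr, key]
    exact hY

lemma dirA {k : ℕ} (hk2 : 2 ≤ k / 2) (hkk : k = 2 * (k / 2)) (μ : ℂ) (Y : V → ℂ)
    (hY0 : Y ≠ 0) (hY : G.adjMatrix ℂ *ᵥ Y = μ • Y) :
    ∃ X : V × ℕ → ℂ, X ≠ 0 ∧ ∀ u, aPoly (hEdges G k) X u = μ * X u ^ (k - 1) := by
  set n := k / 2 with hn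
  have hn0 : n ≠ 0 := by omega
  set g : V → ℂ := fun a => Y a ^ ((n : ℂ)⁻¹) with hg
  have hgpow : ∀ a, g a ^ n = Y a := by
    intro a
    by_cases h : Y a = 0
    · rw [hg]
      simp only [h]
      rw [Complex.zero_cpow (by exact_mod_cast inv_ne_zero (Nat.cast_ne_zero.2 hn0))]
      exact zero_pow hn0
    · exact Complex.cpow_nat_inv_pow _ hn0
  refine ⟨fun p => if p.2 < n then g p.1 else 0, ?_, ?_⟩
  · obtain ⟨a, ha⟩ := Function.ne_iff.1 hY0
    have hga : g a ≠ 0 := fun h => ha (by rw [← hgpow a, h, zero_pow hn0]; rfl)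
    intro h
    have := congrFun h (a, 0)
    simp only [Pi.zero_apply] at this
    rw [if_pos (by omega)] at this
    exact hga this
  · rintro ⟨v, i⟩
    by_cases hi : i < n
    · rw [aPoly_hEdges G _ v hi (by omega)]
      have h1 : ∀ w, (∏ j ∈ Finset.range n, (fun p : V × ℕ => if p.2 < n then g p.1 else 0) (w, j)) = Y w := by
        intro w
        have hc : ∀ j ∈ Finset.range n,
            (fun p : V × ℕ => if p.2 < n then g p.1 else 0) (w, j) = g w := by
          intro j hj
          simp only [Finset.mem_range.1 hj, if_true]
        rw [Finset.prod_congr rfl hc, Finset.prod_const, Finset.card_range, hgpow w]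
      have h2 : (∏ j ∈ (Finset.range n).erase i, (fun p : V × ℕ => if p.2 < n then g p.1 else 0) (v, j)) = g v ^ (n - 1) := by
        have hc : ∀ j ∈ (Finset.range n).erase i,
            (fun p : V × ℕ => if p.2 < n then g p.1 else 0) (v, j) = g v := by
          intro j hj
          have := Finset.mem_range.1 (Finset.mem_erase.1 hj).2
          simp only [this, if_true]
        rw [Finset.prod_congr rfl hc, Finset.prod_const,
          Finset.card_erase_of_mem (Finset.mem_range.2 hi), Finset.card_range]
      rw [← hn]; simp only at h1 h2 ⊢; simp only [h1, h2]
      rw [← Finset.mul_sum]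
      have h3 : ∑ w ∈ G.neighborFinset v, Y w = μ * Y v := by
        have := congrFun hY v
        rw [SimpleGraph.adjMatrix_mulVec_apply] at this
        simpa using this
      rw [h3, ← hgpow v, if_pos hi, show k - 1 = n - 1 + n by omega, pow_add]
      ring
    · rw [aPoly_hEdges_isolated G _ v hi]
      simp only [hi, if_false]
      rw [zero_pow (by omega), mul_zero]

lemma dirB {k : ℕ} (hk2 : 2 ≤ k / 2) (hkk : k = 2 * (k / 2)) (lam : ℂ) (X : V × ℕ → ℂ)
    (hX0 : X ≠ 0) (hE : ∀ u, aPoly (hEdges G k) X u = lam * X u ^ (k - 1)) (r0 : ℝ)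
    (hr0 : 0 ≤ r0)
    (hRay : ∀ y : V → ℝ, (∀ v, 0 ≤ y v) →
      ∑ v, y v * ∑ w ∈ G.neighborFinset v, y w ≤ r0 * ∑ v, (y v) ^ 2) :
    ‖lam‖ ≤ r0 := by
  by_cases hlam : lam = 0
  · simp [hlam, hr0]
  set n := k / 2 with hn
  have hn0 : n ≠ 0 := by omega
  set P : V → ℂ := fun w => ∏ j ∈ Finset.range n, X (w, j) with hP
  set S : V → ℂ := fun v => ∑ w ∈ G.neighborFinset v, P w with hS
  -- key identity
  have key : ∀ v, ∀ i < n, lam * X (v, i) ^ k = P v * S v := by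
    intro v i hi
    have he := hE (v, i)
    rw [aPoly_hEdges G X v hi (by omega)] at he
    rw [← Finset.mul_sum] at he
    calc lam * X (v, i) ^ k = lam * X (v, i) ^ (k - 1) * X (v, i) := by
          rw [mul_assoc, ← pow_succ, show k - 1 + 1 = k by omega]
      _ = (∏ j ∈ (Finset.range n).erase i, X (v, j)) * S v * X (v, i) := by rw [← he]
      _ = (X (v, i) * ∏ j ∈ (Finset.range n).erase i, X (v, j)) * S v := by ring
      _ = P v * S v := by
          simp only [hP]
          rw [← Finset.mul_prod_erase (Finset.range n) (fun j => X (v, j))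
            (Finset.mem_range.2 hi)]
  -- vanishing on isolated vertices
  have hiso : ∀ v, ∀ i, ¬ i < n → X (v, i) = 0 := by
    intro v i hi
    have he := hE (v, i)
    rw [aPoly_hEdges_isolated G X v hi] at he
    have := (mul_eq_zero.1 he.symm).resolve_left hlam
    exact pow_eq_zero_iff (by omega) |>.1 this
  set y : V → ℝ := fun v => ‖P v‖ with hy
  have hy0 : ∀ v, 0 ≤ y v := fun v => norm_nonneg _
  -- per-vertex inequality
  have hineq : ∀ v, ‖lam‖ * y v ^ 2 ≤ y v * ∑ w ∈ G.neighborFinset v, y w := by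
    intro v
    have habs : ∀ i < n, ‖lam‖ * ‖X (v, i)‖ ^ k
        = y v * ‖S v‖ := by
      intro i hi
      have := congrArg (‖·‖) (key v i hi)
      simp only [norm_mul, norm_pow] at this
      exact this
    have hlamabs : (0:ℝ) < ‖lam‖ := by
      simpa [norm_pos_iff] using hlam
    set c : ℝ := y v * ‖S v‖ / ‖lam‖ with hcdef
    have hc0 : 0 ≤ c := by
      apply div_nonneg _ hlamabs.le
      exact mul_nonneg (hy0 v) (norm_nonneg _)
    have hciv : ∀ i ∈ Finset.range n, ‖X (v, i)‖ ^ k = c := by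
      intro i hi
      have h1 := habs i (Finset.mem_range.1 hi)
      rw [hcdef, ← h1]
      field_simp
    have hyprod : y v = ∏ i ∈ Finset.range n, ‖X (v, i)‖ := by
      rw [hy]; simp only [hP, norm_prod]
    have hyn : (y v ^ 2) ^ n = c ^ n := by
      rw [← pow_mul, show 2 * n = k by omega, hyprod, ← Finset.prod_pow,
        Finset.prod_congr rfl hciv, Finset.prod_const, Finset.card_range]
    have hy2 : y v ^ 2 = c := (pow_left_inj₀ (sq_nonneg _) hc0 hn0).1 hyn
    have hyv : ‖lam‖ * y v ^ 2 = y v * ‖S v‖ := by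
      rw [hy2, hcdef]
      field_simp
    rw [hyv]
    have := norm_sum_le (G.neighborFinset v) P
    calc y v * ‖S v‖ ≤ y v * ∑ w ∈ G.neighborFinset v, ‖P w‖ :=
          mul_le_mul_of_nonneg_left this (hy0 v)
      _ = y v * ∑ w ∈ G.neighborFinset v, y w := rfl
  -- y is nonzero somewhere
  obtain ⟨⟨v0, i0⟩, hXvi⟩ := Function.ne_iff.1 hX0
  simp only [Pi.zero_apply] at hXvi
  have hi0 : i0 < n := by
    by_contra h
    exact hXvi (hiso v0 i0 h)
  have hyv0 : 0 < y v0 := by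
    rcases (hy0 v0).lt_or_eq with h | h
    · exact h
    · exfalso
      have hP0 : P v0 = 0 := by
        have := norm_eq_zero.1 h.symm
        exact this
      have := key v0 i0 hi0
      rw [hP0, zero_mul, mul_eq_zero] at this
      rcases this with h1 | h1
      · exact hlam h1
      · exact hXvi (pow_eq_zero_iff (by omega) |>.1 h1)
  have hT : 0 < ∑ v, y v ^ 2 := by
    have h1 : y v0 ^ 2 ≤ ∑ v, y v ^ 2 :=
      Finset.single_le_sum (fun v _ => sq_nonneg (y v)) (Finset.mem_univ v0)
    nlinarith
  have hsum : ‖lam‖ * ∑ v, y v ^ 2 ≤ r0 * ∑ v, y v ^ 2 := by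
    calc ‖lam‖ * ∑ v, y v ^ 2 = ∑ v, ‖lam‖ * y v ^ 2 := by
          rw [Finset.mul_sum]
      _ ≤ ∑ v, y v * ∑ w ∈ G.neighborFinset v, y w := Finset.sum_le_sum fun v _ => hineq v
      _ ≤ r0 * ∑ v, y v ^ 2 := hRay y hy0
  exact le_of_mul_le_mul_right (by linarith [hsum]) hT

lemma adjMatrix_map_complex :
    (G.adjMatrix ℝ).map (Complex.ofReal) = G.adjMatrix ℂ := by
  ext i j
  simp [Matrix.map_apply, SimpleGraph.adjMatrix_apply, apply_ite Complex.ofReal]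

lemma adj_hermitian : IsSelfAdjoint (G.adjMatrix ℂ) := by
  show star _ = _
  rw [Matrix.star_eq_conjTranspose]
  ext i j
  simp [Matrix.conjTranspose_apply, SimpleGraph.adjMatrix_apply, apply_ite (starRingEnd ℂ),
    G.adj_comm]

variable [Nonempty V]

lemma rayleigh_bound (r0 : ℝ)
    (hr0 : ∀ μ ∈ spectrum ℂ (G.adjMatrix ℂ), ‖μ‖ ≤ r0) (hr00 : 0 ≤ r0)
    (y : V → ℝ) :
    ∑ v, y v * ∑ w ∈ G.neighborFinset v, y w ≤ r0 * ∑ v, (y v) ^ 2 := by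
  set Mc := G.adjMatrix ℂ with hMc
  set T := Matrix.toEuclideanCLM (𝕜 := ℂ) (n := V) Mc with hT
  have hspecT : spectrum ℂ T = spectrum ℂ Mc :=
    AlgEquiv.spectrum_eq (AlgEquivClass.toAlgEquiv (Matrix.toEuclideanCLM (𝕜 := ℂ) (n := V))) Mc
  have hsa : IsSelfAdjoint T := by
    rw [hT]
    show star _ = _
    rw [← map_star]
    congr 1
    exact adj_hermitian G
  have hnormT : ‖T‖ ≤ r0 := by
    have h1 : spectralRadius ℂ T = ‖T‖₊ := hsa.spectralRadius_eq_nnnorm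
    have h2 : spectralRadius ℂ T ≤ ENNReal.ofReal r0 := by
      rw [spectralRadius]
      refine iSup₂_le fun μ hμ => ?_
      rw [hspecT] at hμ
      have := hr0 μ hμ
      rw [← ENNReal.ofReal_coe_nnreal]
      apply ENNReal.ofReal_le_ofReal
      simpa using this
    rw [h1] at h2
    rw [← ENNReal.ofReal_coe_nnreal] at h2
    have := (ENNReal.ofReal_le_ofReal_iff hr00).1 h2
    simpa using this
  set z : EuclideanSpace ℂ V := (WithLp.equiv 2 _).symm (fun v => (y v : ℂ)) with hz
  have hTz : T z = (WithLp.equiv 2 _).symm (Mc *ᵥ fun v => (y v : ℂ)) := by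
    exact rfl
  have hinner : (inner ℂ z (T z) : ℂ) = ((∑ v, y v * ∑ w ∈ G.neighborFinset v, y w : ℝ) : ℂ) := by
    rw [PiLp.inner_apply, hTz]
    push_cast
    refine Finset.sum_congr rfl fun v _ => ?_
    simp only [hz, WithLp.equiv_symm_apply, PiLp.toLp_apply, RCLike.inner_apply]
    rw [hMc, SimpleGraph.adjMatrix_mulVec_apply]
    simp [Complex.conj_ofReal, mul_comm]
  have hznorm : ‖z‖ ^ 2 = ∑ v, (y v) ^ 2 := by
    rw [EuclideanSpace.norm_eq, Real.sq_sqrt (Finset.sum_nonneg fun v _ => sq_nonneg _)]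
    refine Finset.sum_congr rfl fun v _ => ?_
    simp [hz, WithLp.equiv_symm_apply, PiLp.toLp_apply, Complex.norm_real, sq_abs]
  calc ∑ v, y v * ∑ w ∈ G.neighborFinset v, y w
      ≤ ‖(inner ℂ z (T z) : ℂ)‖ := by
        rw [hinner, Complex.norm_real, Real.norm_eq_abs]
        exact le_abs_self _
    _ ≤ ‖z‖ * ‖T z‖ := norm_inner_le_norm z (T z)
    _ ≤ ‖z‖ * (‖T‖ * ‖z‖) := by
        apply mul_le_mul_of_nonneg_left (T.le_opNorm z) (norm_nonneg z)
    _ ≤ r0 * ∑ v, (y v) ^ 2 := by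
        rw [← hznorm]
        have := mul_le_mul_of_nonneg_right hnormT (mul_nonneg (norm_nonneg z) (norm_nonneg z))
        nlinarith [norm_nonneg z]

end AuxSpec

/-- For connected `G`, even `k ≥ 4` and a positive vector `x` on `V(G)`, with
`𝐱_𝐯 = x_v^{2/k}`: `x` is an eigenvector of `A(G)` for `ρ` iff `𝐱` satisfies the
adjacency-tensor eigenvector equation of `G^{k,k/2}` for `ρ`; consequently
`ρ(A(G)) = ρ(𝒜(G^{k,k/2}))`. -/
theorem stmt_14 {V : Type*} [Fintype V] [DecidableEq V] (G : SimpleGraph V)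
    [DecidableRel G.Adj] (hG : G.Connected) (k : ℕ) (hk : Even k) (hk4 : 4 ≤ k)
    (x : V → ℝ) (hx : ∀ v, 0 < x v) (ρ : ℝ) :
    ((G.adjMatrix ℝ) *ᵥ x = ρ • x ↔
      ∀ u : V, ρ * (x u ^ ((2 : ℝ) / k)) ^ (k - 1) =
        ∑ v ∈ G.neighborFinset u,
          (x u ^ ((2 : ℝ) / k)) ^ (k / 2 - 1) * (x v ^ ((2 : ℝ) / k)) ^ (k / 2)) ∧
    specRad (G.adjMatrix ℝ) = hSpecRad (hEdges G k) k := by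
  classical
  have hnV : Nonempty V := hG.nonempty
  obtain ⟨r, hr⟩ := hk
  have hk2 : 2 ≤ k / 2 := by omega
  have hkk : k = 2 * (k / 2) := by omega
  constructor
  · -- part 1: the eigenvector equation correspondence
    have hkR : (k : ℝ) = 2 * ((k / 2 : ℕ) : ℝ) := by exact_mod_cast congrArg (Nat.cast : ℕ → ℝ) hkk
    set n := k / 2 with hn
    set t : V → ℝ := fun u => x u ^ ((2 : ℝ) / k) with ht
    have htpos : ∀ u, 0 < t u := fun u => Real.rpow_pos_of_pos (hx u) _
    have htn : ∀ u, t u ^ n = x u := by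
      intro u
      rw [ht]
      rw [← Real.rpow_natCast (x u ^ ((2 : ℝ) / k)) n, ← Real.rpow_mul (hx u).le]
      rw [show (2 : ℝ) / k * n = 1 by rw [hkR]; field_simp, Real.rpow_one]
    have hmv : (G.adjMatrix ℝ *ᵥ x = ρ • x) ↔
        ∀ u, ∑ w ∈ G.neighborFinset u, x w = ρ * x u := by
      rw [funext_iff]
      refine forall_congr' fun u => ?_
      rw [SimpleGraph.adjMatrix_mulVec_apply, Pi.smul_apply, smul_eq_mul]
    rw [hmv]
    refine forall_congr' fun u => ?_
    have hsum : ∑ v ∈ G.neighborFinset u, t u ^ (n - 1) * t v ^ n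
        = t u ^ (n - 1) * ∑ v ∈ G.neighborFinset u, x v := by
      rw [Finset.mul_sum]
      exact Finset.sum_congr rfl fun v _ => by rw [htn v]
    have hA : t u ^ (k - 1) = t u ^ (n - 1) * x u := by
      rw [← htn u, ← pow_add, show n - 1 + n = k - 1 by omega]
    rw [hsum, hA]
    have htne : t u ^ (n - 1) ≠ 0 := (pow_pos (htpos u) _).ne'
    constructor
    · intro h
      rw [h]
      ring
    · intro h
      have : t u ^ (n - 1) * (ρ * x u) = t u ^ (n - 1) * ∑ v ∈ G.neighborFinset u, x v := by
        rw [← h]; ring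
      have := mul_left_cancel₀ htne this
      linarith
  · -- part 2: equality of spectral radii
    set Mc := G.adjMatrix ℂ with hMc
    set S1 : Set ℝ := {r : ℝ | ∃ μ ∈ spectrum ℂ Mc, r = ‖μ‖} with hS1
    have hspecRad : specRad (G.adjMatrix ℝ) = sSup S1 := by
      rw [specRad, adjMatrix_map_complex]
    have hS1img : S1 = (‖·‖) '' spectrum ℂ Mc := by
      ext r
      simp only [hS1, Set.mem_setOf_eq, Set.mem_image]
      constructor
      · rintro ⟨μ, hμ, rfl⟩; exact ⟨μ, hμ, rfl⟩
      · rintro ⟨μ, hμ, rfl⟩; exact ⟨μ, hμ, rfl⟩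
    have hS1fin : S1.Finite := by
      rw [hS1img]
      exact (Matrix.finite_spectrum Mc).image _
    have hspecne : (spectrum ℂ Mc).Nonempty :=
      spectrum.nonempty_of_isAlgClosed_of_finiteDimensional ℂ Mc
    have hS1ne : S1.Nonempty := by
      obtain ⟨μ, hμ⟩ := hspecne
      exact ⟨‖μ‖, μ, hμ, rfl⟩
    have hbdd1 : BddAbove S1 := hS1fin.bddAbove
    have hle1 : ∀ μ ∈ spectrum ℂ Mc, ‖μ‖ ≤ sSup S1 := fun μ hμ =>
      le_csSup hbdd1 ⟨μ, hμ, rfl⟩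
    have hr00 : 0 ≤ sSup S1 := by
      obtain ⟨μ, hμ⟩ := hspecne
      exact le_trans (norm_nonneg μ) (hle1 μ hμ)
    set S2 : Set ℝ := {r : ℝ | ∃ (lam : ℂ) (X : V × ℕ → ℂ), X ≠ 0 ∧
      (∀ u, aPoly (hEdges G k) X u = lam * (X u) ^ (k - 1)) ∧ r = ‖lam‖} with hS2
    have hsub : S1 ⊆ S2 := by
      rintro _ ⟨μ, hμ, rfl⟩
      obtain ⟨Y, hY0, hY⟩ := (spec_iff Mc μ).1 hμ
      obtain ⟨X, hX0, hXeq⟩ := dirA G hk2 hkk μ Y hY0 hY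
      exact ⟨μ, X, hX0, hXeq, rfl⟩
    have hbound : ∀ r ∈ S2, r ≤ sSup S1 := by
      rintro _ ⟨lam, X, hX0, hXeq, rfl⟩
      refine dirB G hk2 hkk lam X hX0 hXeq (sSup S1) hr00 fun y _ => ?_
      exact rayleigh_bound G (sSup S1) hle1 hr00 y
    have hS2ne : S2.Nonempty := hS1ne.mono hsub
    have hbdd2 : BddAbove S2 := ⟨sSup S1, hbound⟩
    rw [hspecRad, hSpecRad]
    have h2 : {r : ℝ | ∃ (lam : ℂ) (x : V × ℕ → ℂ), x ≠ 0 ∧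
        (∀ u, aPoly (hEdges G k) x u = lam * (x u) ^ (k - 1)) ∧ r = ‖lam‖} = S2 := rfl
    rw [h2]
    exact le_antisymm (csSup_le_csSup hbdd2 hS1ne hsub) (csSup_le hS2ne hbound)
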